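/- arXiv:2011.01932 — 3 statements merged into one kernel-verified Lean document; each statement's English description precedes it below -/
import Mathlib

section
/- Hit-and-stick for the rigid shell spring-mass model (Corollary 1.1): Let k, M, m > 0, set b(ξ) := (k/M)·ξ and a := M/m, and let 𝒟(h,ξ) = g(h)·h^(−α) for a locally Lipschitz g : (0,∞) → [C₁, C₂] with 0 < C₁ ≤ C₂ and α ∈ [1,∞). Take initial data ξ₀ = ξ̇₀ = 0, h₀ > 0, ḣ₀ < 0, set t₀ := −h₀/ḣ₀, and for μ > 0 let (h_μ, ξ_μ) denote the unique global solution of (gf). Then, as μ → 0⁺, h_μ converges uniformly on compact subsets of [0,∞) to the monotone function H(t) := max{0, h₀ + ḣ₀·t}; that is, in the vanishing viscosity limit the shell falls freely to the wall and remains at the wall for all later times. -/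
open Real Filter Set MeasureTheory Metric

noncomputable section

/-- The potential `B(y) = ∫₀^y b(w) dw` of the elastic response `b`. -/
def potB (b : ℝ → ℝ) (y : ℝ) : ℝ := ∫ w in (0:ℝ)..y, b w

/-- (B1): `b` is locally Lipschitz continuous. -/
def HypB1 (b : ℝ → ℝ) : Prop := LocallyLipschitz b

/-- (B2): the potential `B` is coercive, i.e. `B(y) → ∞` as `|y| → ∞`. -/
def HypB2 (b : ℝ → ℝ) : Prop := Tendsto (potB b) (cocompact ℝ) atTop

/-- (B3): the potential `B` is nonnegative. -/
def HypB3 (b : ℝ → ℝ) : Prop := ∀ y : ℝ, 0 ≤ potB b y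

/-- (B4): `b(y)·y > 0` for all `y ≠ 0`. -/
def HypB4 (b : ℝ → ℝ) : Prop := ∀ y : ℝ, y ≠ 0 → 0 < b y * y

/-- The drag factor `𝒟` maps `(0,∞) × ℝ` into `(0,∞)`. -/
def HypDpos (D : ℝ → ℝ → ℝ) : Prop := ∀ x ξ : ℝ, 0 < x → 0 < D x ξ

/-- (D1): `𝒟` is locally Lipschitz continuous on `(0,∞) × ℝ`. -/
def HypD1 (D : ℝ → ℝ → ℝ) : Prop :=
  ∀ p : ℝ × ℝ, 0 < p.1 → ∃ ε > 0, ∃ L : NNReal,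
    LipschitzOnWith L (fun q : ℝ × ℝ => D q.1 q.2)
      (Metric.ball p ε ∩ {q : ℝ × ℝ | 0 < q.1})

/-- (D2): singular lower bound `𝒟(h,ξ) ≥ c·h^(−α)`, uniformly in `ξ`. -/
def HypD2 (D : ℝ → ℝ → ℝ) (c α : ℝ) : Prop :=
  0 < c ∧ 1 ≤ α ∧ ∀ x ξ : ℝ, 0 < x → c * x ^ (-α) ≤ D x ξ

/-- (D3): `𝒟(h,ξ) = g(h)·h^(−α)` with `g : (0,∞) → [C₁,C₂]` locally Lipschitz. -/
def HypD3 (D : ℝ → ℝ → ℝ) (g : ℝ → ℝ) (C₁ C₂ α : ℝ) : Prop :=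
  0 < C₁ ∧ C₁ ≤ C₂ ∧ 1 ≤ α ∧
  (∀ x : ℝ, 0 < x → ∃ ε > 0, ∃ L : NNReal,
      LipschitzOnWith L g (Metric.ball x ε ∩ Set.Ioi 0)) ∧
  (∀ x : ℝ, 0 < x → g x ∈ Set.Icc C₁ C₂) ∧
  (∀ x ξ : ℝ, 0 < x → D x ξ = g x * x ^ (-α))

/-- (D4): `ξ ↦ 𝒟(h,ξ)` is nondecreasing for every `h > 0`. -/
def HypD4 (D : ℝ → ℝ → ℝ) : Prop :=
  ∀ x : ℝ, 0 < x → ∀ ξ₁ ξ₂ : ℝ, ξ₁ ≤ ξ₂ → D x ξ₁ ≤ D x ξ₂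

/-- (D5): `𝒟(h,−δ₁) ≥ c₁·h^(−γ₁)` with `γ₁ ≥ α`. -/
def HypD5 (D : ℝ → ℝ → ℝ) (α δ₁ c₁ γ₁ : ℝ) : Prop :=
  0 < δ₁ ∧ 0 < c₁ ∧ α ≤ γ₁ ∧ ∀ x : ℝ, 0 < x → c₁ * x ^ (-γ₁) ≤ D x (-δ₁)

/-- (D6): `𝒟(h,−δ₂) ≤ γ(h)·h^(−γ₁)` with `∫₀^h γ(y)/y dy → 0` as `h → 0⁺`. -/
def HypD6 (D : ℝ → ℝ → ℝ) (γ₁ δ₂ : ℝ) (γfun : ℝ → ℝ) : Prop :=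
  0 < δ₂ ∧ (∀ y : ℝ, 0 < y → 0 ≤ γfun y) ∧
  Tendsto (fun x : ℝ => ∫ y in (0:ℝ)..x, γfun y / y)
    (nhdsWithin 0 (Set.Ioi 0)) (nhds 0) ∧
  ∀ x : ℝ, 0 < x → D x (-δ₂) ≤ γfun x * x ^ (-γ₁)

/-- A global solution of the reduced system (gf) on `[0,∞)`:
`h, ξ` twice differentiable, `h > 0`, satisfying
`ḧ − ξ̈ = a·b(ξ)` and `ḧ = −b(ξ) − μ·𝒟(h,ξ)·ḣ`, with the given initial data. -/
def IsGlobalSolution (a μ : ℝ) (b : ℝ → ℝ) (D : ℝ → ℝ → ℝ)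
    (h0 hd0 ξ0 ξd0 : ℝ) (h ξ : ℝ → ℝ) : Prop :=
  (∀ t : ℝ, 0 ≤ t → 0 < h t) ∧
  (∀ t : ℝ, 0 ≤ t → DifferentiableAt ℝ h t ∧ DifferentiableAt ℝ (deriv h) t ∧
    DifferentiableAt ℝ ξ t ∧ DifferentiableAt ℝ (deriv ξ) t) ∧
  (∀ t : ℝ, 0 ≤ t → deriv (deriv h) t - deriv (deriv ξ) t = a * b (ξ t)) ∧
  (∀ t : ℝ, 0 ≤ t →
    deriv (deriv h) t = - b (ξ t) - μ * D (h t) (ξ t) * deriv h t) ∧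
  h 0 = h0 ∧ deriv h 0 = hd0 ∧ ξ 0 = ξ0 ∧ deriv ξ 0 = ξd0

/-- A solution of the nonlinear oscillator `ξ̈ + a·b(ξ) = 0` on `(t₀,∞)`
with `ξ(t₀) = 0` and `ξ̇(t₀) = v₀` (right derivative at `t₀`). -/
def IsOscSolution (a t₀ v₀ : ℝ) (b : ℝ → ℝ) (ψ : ℝ → ℝ) : Prop :=
  ψ t₀ = 0 ∧
  HasDerivWithinAt ψ v₀ (Set.Ici t₀) t₀ ∧
  ContinuousOn ψ (Set.Ici t₀) ∧
  Tendsto (deriv ψ) (nhdsWithin t₀ (Set.Ioi t₀)) (nhds v₀) ∧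
  ∀ t : ℝ, t₀ < t → DifferentiableAt ℝ ψ t ∧ DifferentiableAt ℝ (deriv ψ) t ∧
    deriv (deriv ψ) t + a * b (ψ t) = 0


namespace HitStick

/-- One-sided derivative bound gives linear growth bound on `[0, t₁]`. -/
lemma le_of_deriv_le {f : ℝ → ℝ} {C t₁ : ℝ}
    (hc : ContinuousOn f (Icc 0 t₁))
    (hd : ∀ s ∈ Ioo (0:ℝ) t₁, DifferentiableAt ℝ f s)
    (hb : ∀ s ∈ Ioo (0:ℝ) t₁, deriv f s ≤ C) :
    ∀ t ∈ Icc (0:ℝ) t₁, f t ≤ f 0 + C * t := by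
  intro t ht
  have h1 : AntitoneOn (fun s => f s - C * s) (Icc 0 t₁) := by
    apply antitoneOn_of_deriv_nonpos (convex_Icc 0 t₁)
    · exact hc.sub ((continuous_const.mul continuous_id).continuousOn)
    · intro s hs
      rw [interior_Icc] at hs
      exact ((hd s hs).sub ((differentiableAt_fun_id).const_mul C)).differentiableWithinAt
    · intro s hs
      rw [interior_Icc] at hs
      have : HasDerivAt (fun s => f s - C * s) (deriv f s - C * 1) s :=
        ((hd s hs).hasDerivAt).sub ((hasDerivAt_id s).const_mul C)
      rw [this.deriv]
      have := hb s hs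
      linarith
  have h0 : (0:ℝ) ∈ Icc (0:ℝ) t₁ := ⟨le_refl _, ht.1.trans ht.2⟩
  have := h1 h0 ht ht.1
  simp only at this
  linarith

/-- Two-sided derivative bound gives a two-sided linear bound. -/
lemma abs_sub_le_of_deriv_abs_le {f : ℝ → ℝ} {c C t₁ : ℝ}
    (hc : ContinuousOn f (Icc 0 t₁))
    (hd : ∀ s ∈ Ioo (0:ℝ) t₁, DifferentiableAt ℝ f s)
    (hb : ∀ s ∈ Ioo (0:ℝ) t₁, |deriv f s - c| ≤ C) :
    ∀ t ∈ Icc (0:ℝ) t₁, |f t - f 0 - c * t| ≤ C * t := by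
  intro t ht
  have hub := le_of_deriv_le (C := C + c) hc hd (fun s hs => by
    have := abs_le.1 (hb s hs); linarith [this.2]) t ht
  have hlb : -(f t) ≤ -(f 0) + (C - c) * t := by
    have := le_of_deriv_le (f := fun s => -(f s)) (C := C - c)
      (hc.neg)
      (fun s hs => (hd s hs).neg)
      (fun s hs => by
        have hds : HasDerivAt (fun s => -(f s)) (-(deriv f s)) s :=
          ((hd s hs).hasDerivAt).neg
        rw [hds.deriv]
        have := abs_le.1 (hb s hs); linarith [this.1]) t ht
    simpa using this
  rw [abs_le]
  constructor <;> linarith [ht.1]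

lemma g_contAt {g : ℝ → ℝ}
    (hg : ∀ x : ℝ, 0 < x → ∃ ε > 0, ∃ L : NNReal,
      LipschitzOnWith L g (Metric.ball x ε ∩ Set.Ioi 0))
    {x : ℝ} (hx : 0 < x) : ContinuousAt g x := by
  obtain ⟨ε, hε, L, hL⟩ := hg x hx
  have hsub : Metric.ball x (min ε x) ⊆ Metric.ball x ε ∩ Set.Ioi 0 := by
    intro y hy
    rw [Metric.mem_ball, Real.dist_eq] at hy
    constructor
    · rw [Metric.mem_ball, Real.dist_eq]; exact hy.trans_le (min_le_left _ _)
    · have := abs_lt.1 (hy.trans_le (min_le_right _ _))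
      simpa using by linarith [this.1]
  have : ContinuousOn g (Metric.ball x (min ε x)) :=
    (hL.mono hsub).continuousOn
  exact this.continuousAt (Metric.ball_mem_nhds x (lt_min hε hx))

lemma integrand_contOn {g : ℝ → ℝ} {α : ℝ}
    (hg : ∀ x : ℝ, 0 < x → ∃ ε > 0, ∃ L : NNReal,
      LipschitzOnWith L g (Metric.ball x ε ∩ Set.Ioi 0)) :
    ContinuousOn (fun y : ℝ => g y * y ^ (-α)) (Set.Ioi 0) := by
  intro y hy
  exact ((g_contAt hg hy).mul
    (Real.continuousAt_rpow_const y (-α) (Or.inl (ne_of_gt hy)))).continuousWithinAt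

lemma G_hasDerivAt {g : ℝ → ℝ} {α : ℝ}
    (hg : ∀ x : ℝ, 0 < x → ∃ ε > 0, ∃ L : NNReal,
      LipschitzOnWith L g (Metric.ball x ε ∩ Set.Ioi 0))
    {h0 x : ℝ} (hh0 : 0 < h0) (hx : 0 < x) :
    HasDerivAt (fun u => ∫ y in h0..u, g y * y ^ (-α)) (g x * x ^ (-α)) x := by
  have hcont := integrand_contOn (α := α) hg
  apply intervalIntegral.integral_hasDerivAt_right
  · apply ContinuousOn.intervalIntegrable
    apply hcont.mono
    intro y hy
    exact lt_of_lt_of_le (lt_min hh0 hx) hy.1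
  · exact hcont.stronglyMeasurableAtFilter isOpen_Ioi _ hx
  · exact (g_contAt hg hx).mul
      (Real.continuousAt_rpow_const x (-α) (Or.inl (ne_of_gt hx)))

lemma G_abs_le {g : ℝ → ℝ} {C₁ C₂ α : ℝ} (hC₁ : 0 < C₁) (hα : 1 ≤ α)
    (hgmem : ∀ x : ℝ, 0 < x → g x ∈ Set.Icc C₁ C₂)
    {h0 ρ x : ℝ} (hρ : 0 < ρ) (hρ0 : ρ ≤ h0) (hρx : ρ ≤ x) :
    |∫ y in h0..x, g y * y ^ (-α)| ≤ C₂ * ρ ^ (-α) * |x - h0| := by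
  have key : ∀ y ∈ Set.uIoc h0 x, ‖g y * y ^ (-α)‖ ≤ C₂ * ρ ^ (-α) := by
    intro y hy
    have hymin : ρ ≤ y := le_trans (le_min hρ0 hρx) (le_of_lt hy.1)
    have hy0 : 0 < y := lt_of_lt_of_le hρ hymin
    have hgy := hgmem y hy0
    have hr1 : y ^ (-α) ≤ ρ ^ (-α) :=
      Real.rpow_le_rpow_of_nonpos hρ hymin (by linarith)
    have hr0 : 0 ≤ y ^ (-α) := le_of_lt (Real.rpow_pos_of_pos hy0 _)
    have hg0 : (0:ℝ) ≤ g y := le_trans (le_of_lt hC₁) hgy.1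
    rw [Real.norm_eq_abs, abs_mul, abs_of_nonneg hg0, abs_of_nonneg hr0]
    exact mul_le_mul hgy.2 hr1 hr0 (le_trans hg0 hgy.2)
  have := intervalIntegral.norm_integral_le_of_norm_le_const key
  simpa [Real.norm_eq_abs] using this

set_option linter.unusedSectionVars false

section Core

variable {k M m μ h0 hd0 C₁ C₂ α : ℝ} {g : ℝ → ℝ} {D : ℝ → ℝ → ℝ} {h ξ : ℝ → ℝ}

variable (hk : 0 < k) (hM : 0 < M) (hm : 0 < m) (hμ : 0 < μ)
  (hD3 : HypD3 D g C₁ C₂ α)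
  (sol : IsGlobalSolution (M/m) μ (fun y => (k/M)*y) D h0 hd0 0 0 h ξ)

include hk hM hm hμ hD3 sol

lemma cleared_eqs : ∀ t : ℝ, 0 ≤ t →
    (M * deriv (deriv h) t = -(k * ξ t) - μ * M * (D (h t) (ξ t)) * deriv h t) ∧
    (m * (deriv (deriv h) t - deriv (deriv ξ) t) = k * ξ t) := by
  intro t ht
  obtain ⟨hpos, hdiff, he1, he2, hi⟩ := sol
  constructor
  · have e2 := he2 t ht
    simp only at e2
    rw [e2]; field_simp
  · have e1 := he1 t ht
    simp only at e1
    rw [e1]; field_simp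

lemma D_pos : ∀ t : ℝ, 0 ≤ t → 0 < D (h t) (ξ t) := by
  intro t ht
  have hpos := sol.1 t ht
  rw [hD3.2.2.2.2.2 _ _ hpos]
  exact mul_pos (lt_of_lt_of_le hD3.1 (hD3.2.2.2.2.1 _ hpos).1)
    (Real.rpow_pos_of_pos hpos _)

lemma energy_hasDeriv : ∀ t : ℝ, 0 ≤ t →
    HasDerivAt (fun t => M/2*(deriv h t)^2 + m/2*(deriv h t - deriv ξ t)^2 + k/2*(ξ t)^2)
      (-(μ * M * D (h t) (ξ t) * (deriv h t)^2)) t := by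
  intro t ht
  obtain ⟨hdH, hdH2, hdX, hdX2⟩ := sol.2.1 t ht
  have d1 : HasDerivAt (deriv h) (deriv (deriv h) t) t := hdH2.hasDerivAt
  have d2 : HasDerivAt (deriv ξ) (deriv (deriv ξ) t) t := hdX2.hasDerivAt
  have d3 : HasDerivAt ξ (deriv ξ t) t := hdX.hasDerivAt
  have t1 := (d1.pow 2).const_mul (M/2)
  have t2 := ((d1.sub d2).pow 2).const_mul (m/2)
  have t3 := (d3.pow 2).const_mul (k/2)
  have hsum := (t1.add t2).add t3
  convert hsum using 1
  · rfl
  · rfl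
  · rfl
  obtain ⟨e2', e1'⟩ := cleared_eqs hk hM hm hμ hD3 sol t ht
  simp only [Pi.sub_apply]
  push_cast
  linear_combination (-(deriv h t)) * e2' + (-(deriv h t - deriv ξ t)) * e1'

lemma energy_le : ∀ t : ℝ, 0 ≤ t →
    M/2*(deriv h t)^2 + m/2*(deriv h t - deriv ξ t)^2 + k/2*(ξ t)^2
      ≤ (M+m)/2 * hd0^2 := by
  intro t ht
  set E : ℝ → ℝ := fun t =>
    M/2*(deriv h t)^2 + m/2*(deriv h t - deriv ξ t)^2 + k/2*(ξ t)^2 with hE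
  have hDer := energy_hasDeriv hk hM hm hμ hD3 sol
  have hanti : AntitoneOn E (Set.Ici 0) := by
    apply antitoneOn_of_deriv_nonpos (convex_Ici 0)
    · exact fun s hs => ((hDer s hs).continuousAt).continuousWithinAt
    · intro s hs
      rw [interior_Ici] at hs
      exact ((hDer s (le_of_lt hs)).differentiableAt).differentiableWithinAt
    · intro s hs
      rw [interior_Ici] at hs
      rw [(hDer s (le_of_lt hs)).deriv]
      have hD := D_pos hk hM hm hμ hD3 sol s (le_of_lt hs)
      have : 0 ≤ μ * M * D (h s) (ξ s) * (deriv h s)^2 := by positivity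
      linarith
  have := hanti Set.self_mem_Ici ht ht
  obtain ⟨hi1, hi2, hi3, hi4⟩ := sol.2.2.2.2
  rw [hE] at this
  simp only [hi2, hi3, hi4] at this
  calc E t ≤ _ := this
  _ = (M+m)/2 * hd0^2 := by ring

lemma momentum_const (hh0 : 0 < h0) : ∀ t : ℝ, 0 ≤ t →
    (M+m) * deriv h t - m * deriv ξ t
      + μ*M*(∫ y in h0..(h t), g y * y ^ (-α)) = (M+m)*hd0 := by
  have hglip := hD3.2.2.2.1
  have hDeq := hD3.2.2.2.2.2
  set F : ℝ → ℝ := fun t => (M+m) * deriv h t - m * deriv ξ t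
      + μ*M*(∫ y in h0..(h t), g y * y ^ (-α)) with hF
  have hDer : ∀ t : ℝ, 0 ≤ t → HasDerivAt F 0 t := by
    intro t ht
    obtain ⟨hdH, hdH2, hdX, hdX2⟩ := sol.2.1 t ht
    have d1 : HasDerivAt (deriv h) (deriv (deriv h) t) t := hdH2.hasDerivAt
    have d2 : HasDerivAt (deriv ξ) (deriv (deriv ξ) t) t := hdX2.hasDerivAt
    have dh : HasDerivAt h (deriv h t) t := hdH.hasDerivAt
    have hpos := sol.1 t ht
    have dG : HasDerivAt (fun u => ∫ y in h0..u, g y * y ^ (-α))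
        (g (h t) * (h t) ^ (-α)) (h t) := G_hasDerivAt hglip hh0 hpos
    have dGh : HasDerivAt (fun t => ∫ y in h0..(h t), g y * y ^ (-α))
        (g (h t) * (h t) ^ (-α) * deriv h t) t := dG.comp t dh
    have hsum := ((d1.const_mul (M+m)).sub (d2.const_mul m)).add (dGh.const_mul (μ*M))
    convert hsum using 1
    · rfl
    · rfl
    · rfl
    obtain ⟨e2', e1'⟩ := cleared_eqs hk hM hm hμ hD3 sol t ht
    have hD : D (h t) (ξ t) = g (h t) * (h t) ^ (-α) := hDeq _ _ hpos
    linear_combination (-1 : ℝ) * e2' + (-1 : ℝ) * e1' + (μ*M*deriv h t) * hD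
  have key : ∀ t : ℝ, 0 ≤ t → F t = F 0 := by
    intro t ht
    have hanti : AntitoneOn F (Set.Ici 0) := by
      apply antitoneOn_of_deriv_nonpos (convex_Ici 0)
      · exact fun s hs => ((hDer s hs).continuousAt).continuousWithinAt
      · intro s hs
        rw [interior_Ici] at hs
        exact ((hDer s (le_of_lt hs)).differentiableAt).differentiableWithinAt
      · intro s hs
        rw [interior_Ici] at hs
        rw [(hDer s (le_of_lt hs)).deriv]
    have hmono : MonotoneOn F (Set.Ici 0) := by
      apply monotoneOn_of_deriv_nonneg (convex_Ici 0)
      · exact fun s hs => ((hDer s hs).continuousAt).continuousWithinAt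
      · intro s hs
        rw [interior_Ici] at hs
        exact ((hDer s (le_of_lt hs)).differentiableAt).differentiableWithinAt
      · intro s hs
        rw [interior_Ici] at hs
        rw [(hDer s (le_of_lt hs)).deriv]
    exact le_antisymm (hanti Set.self_mem_Ici ht ht) (hmono Set.self_mem_Ici ht ht)
  intro t ht
  have := key t ht
  obtain ⟨hi1, hi2, hi3, hi4⟩ := sol.2.2.2.2
  rw [hF] at this
  simp only [hi1, hi2, hi4, intervalIntegral.integral_same] at this
  calc (M+m) * deriv h t - m * deriv ξ t
      + μ*M*(∫ y in h0..(h t), g y * y ^ (-α)) = _ := this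
  _ = (M+m)*hd0 := by ring

lemma deriv_h_abs_le : ∀ t : ℝ, 0 ≤ t →
    |deriv h t| ≤ Real.sqrt ((M+m)/M) * |hd0| := by
  intro t ht
  have hE := energy_le hk hM hm hμ hD3 sol t ht
  have h1 : (deriv h t)^2 ≤ ((M+m)/M) * hd0^2 := by
    rw [div_mul_eq_mul_div, le_div_iff₀ hM]
    nlinarith [sq_nonneg (deriv h t - deriv ξ t), sq_nonneg (ξ t)]
  calc |deriv h t| = Real.sqrt ((deriv h t)^2) := (Real.sqrt_sq_eq_abs _).symm
  _ ≤ Real.sqrt (((M+m)/M)*hd0^2) := Real.sqrt_le_sqrt h1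
  _ = Real.sqrt ((M+m)/M) * |hd0| := by
      rw [Real.sqrt_mul (by positivity), Real.sqrt_sq_eq_abs]

/-- Grönwall-type bound for the internal oscillator while `h ≥ ρ`. -/
lemma xi_deriv_bound {ρ t₁ : ℝ} (hρ : 0 < ρ)
    (hhρ : ∀ s ∈ Icc (0:ℝ) t₁, ρ ≤ h s) :
    ∀ t ∈ Icc (0:ℝ) t₁, |deriv ξ t| ≤
      μ * (1 + (C₂ * ρ ^ (-α)) * (Real.sqrt ((M+m)/M) * |hd0|) * t₁) := by
  set V := Real.sqrt ((M+m)/M) * |hd0| with hV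
  have hV0 : 0 ≤ V := by positivity
  set Db := C₂ * ρ ^ (-α) with hDb
  have hDb0 : 0 < Db := by
    have : 0 < C₂ := lt_of_lt_of_le hD3.1 hD3.2.1
    positivity
  set Ω2 := k*(M+m)/(M*m) with hΩ2
  have hΩ20 : 0 < Ω2 := by positivity
  set e : ℝ → ℝ := fun t => (deriv ξ t)^2 + Ω2*(ξ t)^2 with he
  have hq_pos : ∀ s : ℝ, 0 < e s + μ^2 := by
    intro s
    have h1 : 0 ≤ e s := by positivity
    positivity
  set y : ℝ → ℝ := fun t => Real.sqrt (e t + μ^2) with hy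
  have hyd : ∀ s : ℝ, 0 ≤ s → HasDerivAt y
      ((-(2*μ*(D (h s) (ξ s))*(deriv ξ s)*(deriv h s))) / (2*Real.sqrt (e s + μ^2))) s := by
    intro s hs
    obtain ⟨hdH, hdH2, hdX, hdX2⟩ := sol.2.1 s hs
    have d2 : HasDerivAt (deriv ξ) (deriv (deriv ξ) s) s := hdX2.hasDerivAt
    have d3 : HasDerivAt ξ (deriv ξ s) s := hdX.hasDerivAt
    have hede : HasDerivAt (fun t => e t + μ^2)
        (-(2*μ*(D (h s) (ξ s))*(deriv ξ s)*(deriv h s))) s := by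
      have t1 := d2.pow 2
      have t2 := (d3.pow 2).const_mul Ω2
      have hsum := (t1.add t2).add_const (μ^2)
      obtain ⟨e2', e1'⟩ := cleared_eqs hk hM hm hμ hD3 sol s hs
      have hM' : (M:ℝ) ≠ 0 := ne_of_gt hM
      have hm' : (m:ℝ) ≠ 0 := ne_of_gt hm
      have hxi2 : deriv (deriv ξ) s =
          (-(k*(M+m))*(ξ s) - μ*M*m*(D (h s) (ξ s))*(deriv h s))/(M*m) := by
        rw [eq_div_iff (by positivity : M*m ≠ 0)]
        linear_combination m*e2' + (-M)*e1'
      convert hsum using 1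
      · rfl
      · rfl
      · rfl
      rw [hxi2, hΩ2]
      push_cast
      field_simp
      ring
    have hsq := (Real.hasDerivAt_sqrt (ne_of_gt (hq_pos s))).comp s hede
    convert hsq using 1
    · rfl
    · rfl
    · rfl
    field_simp
  have hbd : ∀ s ∈ Ioo (0:ℝ) t₁, deriv y s ≤ μ * (Db * V) := by
    intro s hs
    have hs0 : (0:ℝ) ≤ s := le_of_lt hs.1
    rw [(hyd s hs0).deriv]
    set q := Real.sqrt (e s + μ^2) with hqdef
    have hq0 : 0 < q := Real.sqrt_pos.2 (hq_pos s)
    have hxiq : |deriv ξ s| ≤ q := by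
      rw [← Real.sqrt_sq_eq_abs]
      apply Real.sqrt_le_sqrt
      have hes : e s = (deriv ξ s)^2 + Ω2*(ξ s)^2 := rfl
      have : 0 ≤ Ω2*(ξ s)^2 := by positivity
      linarith [sq_nonneg μ]
    have hhV : |deriv h s| ≤ V := deriv_h_abs_le hk hM hm hμ hD3 sol s hs0
    have hpos := sol.1 s hs0
    have hDub : D (h s) (ξ s) ≤ Db := by
      rw [hD3.2.2.2.2.2 _ _ hpos, hDb]
      have hgy := hD3.2.2.2.2.1 _ hpos
      have hr1 : (h s) ^ (-α) ≤ ρ ^ (-α) :=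
        Real.rpow_le_rpow_of_nonpos hρ (hhρ s ⟨hs0, le_of_lt hs.2⟩)
          (by linarith [hD3.2.2.1])
      have hr0 : 0 ≤ (h s) ^ (-α) := le_of_lt (Real.rpow_pos_of_pos hpos _)
      exact mul_le_mul hgy.2 hr1 hr0 (le_trans (le_of_lt hD3.1)
        (le_trans hgy.1 hgy.2))
    have hD0 : 0 ≤ D (h s) (ξ s) := le_of_lt (D_pos hk hM hm hμ hD3 sol s hs0)
    rw [div_le_iff₀ (by positivity : (0:ℝ) < 2*q)]
    calc -(2*μ*(D (h s) (ξ s))*(deriv ξ s)*(deriv h s))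
        = (2*μ*(D (h s) (ξ s))) * (-((deriv ξ s)*(deriv h s))) := by ring
      _ ≤ (2*μ*(D (h s) (ξ s))) * (|deriv ξ s| * |deriv h s|) := by
          apply mul_le_mul_of_nonneg_left _ (by positivity)
          rw [← abs_mul]
          exact neg_le_abs _
      _ ≤ (2*μ*Db) * (q*V) := by
          apply mul_le_mul (by
            have h9 := mul_le_mul_of_nonneg_left hDub
              (show (0:ℝ) ≤ 2*μ by positivity)
            linarith) (mul_le_mul hxiq hhV (abs_nonneg _)
            (le_of_lt hq0)) (by positivity) (by positivity)
      _ = μ * (Db * V) * (2*q) := by ring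
  have hcont : ContinuousOn y (Icc 0 t₁) :=
    fun s hs => ((hyd s hs.1).continuousAt).continuousWithinAt
  have hdiff : ∀ s ∈ Ioo (0:ℝ) t₁, DifferentiableAt ℝ y s :=
    fun s hs => (hyd s (le_of_lt hs.1)).differentiableAt
  have hmain := le_of_deriv_le hcont hdiff hbd
  intro t ht
  have hy0 : y 0 = μ := by
    obtain ⟨hi1, hi2, hi3, hi4⟩ := sol.2.2.2.2
    rw [hy]
    simp only [he, hi3, hi4]
    rw [show (0:ℝ)^2 + Ω2*(0:ℝ)^2 + μ^2 = μ^2 by ring]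
    rw [Real.sqrt_sq (le_of_lt hμ)]
  have h1 : |deriv ξ t| ≤ y t := by
    rw [hy, ← Real.sqrt_sq_eq_abs]
    apply Real.sqrt_le_sqrt
    have hes : e t = (deriv ξ t)^2 + Ω2*(ξ t)^2 := rfl
    have : 0 ≤ Ω2*(ξ t)^2 := by positivity
    linarith [sq_nonneg μ]
  have h2 := hmain t ht
  rw [hy0] at h2
  have h3 : μ * (Db * V) * t ≤ μ * (Db * V) * t₁ :=
    mul_le_mul_of_nonneg_left ht.2 (by positivity)
  calc |deriv ξ t| ≤ y t := h1
    _ ≤ μ + μ * (Db*V) * t := h2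
    _ ≤ μ * (1 + Db * V * t₁) := by
        have e9 : μ * (1 + Db*V*t₁) = μ + μ*(Db*V)*t₁ := by ring
        linarith
  
/-- The shell can never be found moving upwards at a height where the
accumulated drag impulse is small: momentum + energy contradiction. -/
lemma no_up_crossing (hh0 : 0 < h0) (hhd0 : hd0 < 0) {eps ts : ℝ}
    (hts : 0 ≤ ts) (heq : h ts = eps) (hup : 0 ≤ deriv h ts)
    (hsmall : μ*M*|∫ y in h0..eps, g y * y ^ (-α)| <
      ((M+m) - Real.sqrt (m*(M+m))) * (-hd0)) : False := by
  have hmom := momentum_const hk hM hm hμ hD3 sol hh0 ts hts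
  rw [heq] at hmom
  set Gv := (∫ y in h0..eps, g y * y ^ (-α)) with hGv
  set u := deriv h ts with hu
  set v := deriv ξ ts with hv
  have hE := energy_le hk hM hm hμ hD3 sol ts hts
  set s := Real.sqrt (m*(M+m)) with hs
  have hs0 : 0 ≤ s := Real.sqrt_nonneg _
  have hs2 : s^2 = m*(M+m) := Real.sq_sqrt (by positivity)
  have hsum0 : 0 < M + m + s := by linarith
  have hslt : s < M+m := by
    have h9 : m*(M+m) < (M+m)^2 := by
      have e9 : (M+m)^2 - m*(M+m) = M*(M+m) := by ring
      have h10 : 0 < M*(M+m) := mul_pos hM (by linarith)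
      linarith
    have h11 := Real.sqrt_lt_sqrt (show (0:ℝ) ≤ m*(M+m) by positivity) h9
    rw [Real.sqrt_sq (show (0:ℝ) ≤ M+m by linarith)] at h11
    rw [hs]
    exact h11
  have habs : -(μ*M*|Gv|) ≤ μ*M*Gv := by
    calc -(μ*M*|Gv|) = (μ*M)*(-|Gv|) := by ring
      _ ≤ (μ*M)*Gv := mul_le_mul_of_nonneg_left (neg_abs_le Gv) (by positivity)
      _ = μ*M*Gv := by ring
  have hMu : 0 ≤ M*u := mul_nonneg (le_of_lt hM) hup
  have hqgt : s*(-hd0) < -(m*(u - v)) := by linarith [hmom, habs, hsmall, hMu]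
  have hpos2 : 0 ≤ s*(-hd0) := mul_nonneg hs0 (by linarith)
  have hsq : (s*(-hd0))^2 < (m*(u-v))^2 := by
    calc (s*(-hd0))^2 < (-(m*(u-v)))^2 :=
          pow_lt_pow_left₀ hqgt hpos2 (by norm_num)
      _ = (m*(u-v))^2 := by ring
  have hEm := mul_le_mul_of_nonneg_left hE (le_of_lt hm)
  rw [← hu, ← hv] at hEm
  have hs2' : s^2*hd0^2 = m*((M+m)*hd0^2) := by rw [hs2]; ring
  have hexp : (s*(-hd0))^2 = s^2*hd0^2 := by ring
  have hfin : m*((M+m)*hd0^2) < (m*(u-v))^2 := by linarith [hsq]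
  linarith [hEm, hfin,
    mul_nonneg (mul_nonneg (le_of_lt hm) (le_of_lt hM)) (sq_nonneg u),
    mul_nonneg (mul_nonneg (le_of_lt hm) (le_of_lt hk)) (sq_nonneg (ξ ts))]

end Core

end HitStick

set_option maxHeartbeats 1000000 in
/-- Corollary 1.1: hit-and-stick for the rigid shell spring-mass model:
with `b(ξ) = (k/M)ξ`, `a = M/m` and a rigid drag `𝒟(h,ξ) = g(h)h^(−α)`,
as `μ → 0⁺` the distance `h_μ` converges uniformly on compact subsets of
`[0,∞)` to the monotone function `H(t) = max{0, h₀ + ḣ₀ t}`: the shell falls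
freely to the wall and sticks to it for all later times. -/
theorem hit_and_stick_rigid_shell
    (k M m h0 hd0 C₁ C₂ α : ℝ) (g : ℝ → ℝ) (D : ℝ → ℝ → ℝ)
    (h ξ : ℝ → ℝ → ℝ)
    (hk : 0 < k) (hM : 0 < M) (hm : 0 < m)
    (hh0 : 0 < h0) (hhd0 : hd0 < 0)
    (hD3 : HypD3 D g C₁ C₂ α)
    (hsol : ∀ μ : ℝ, 0 < μ →
      IsGlobalSolution (M / m) μ (fun y => (k / M) * y) D h0 hd0 0 0
        (h μ) (ξ μ)) :
    ∀ K : Set ℝ, IsCompact K → K ⊆ Set.Ici 0 →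
      TendstoUniformlyOn (fun μ t => h μ t) (fun t => max 0 (h0 + hd0 * t))
        (nhdsWithin 0 (Set.Ioi 0)) K := by
  intro K hK hK0
  rcases K.eq_empty_or_nonempty with rfl | hKne
  · exact tendstoUniformlyOn_empty
  have hbdd := hK.bddAbove
  set T : ℝ := sSup K with hT
  have hTK : T ∈ K := hK.sSup_mem hKne
  have hT0 : 0 ≤ T := hK0 hTK
  have hle : ∀ t ∈ K, t ≤ T := fun t ht => le_csSup hbdd ht
  rw [Metric.tendstoUniformlyOn_iff]
  intro ε hε
  have hC₂ : 0 < C₂ := lt_of_lt_of_le hD3.1 hD3.2.1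
  set V := Real.sqrt ((M+m)/M) * |hd0| with hV
  have hV0 : 0 ≤ V := by positivity
  set εh := min (ε/2) (h0/2) with hεh
  have hεh0 : 0 < εh := lt_min (by linarith) (by linarith)
  have hεhh0 : εh ≤ h0/2 := min_le_right _ _
  have hεhε : εh ≤ ε/2 := min_le_left _ _
  set ρ := εh/2 with hρdef
  have hρ0 : 0 < ρ := by positivity
  have hρh0 : ρ ≤ h0 := by
    rw [hρdef]; linarith
  set Db := C₂ * ρ^(-α) with hDb
  have hDb0 : 0 < Db := by positivity
  set c₁ := 1 + Db * V * T with hc₁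
  have hc₁0 : 0 < c₁ := by positivity
  set c₂ := Db * (V*T) with hc₂
  have hc₂0 : 0 ≤ c₂ := by positivity
  set c₃ := (m*c₁ + M*c₂)/(M+m) with hc₃
  have hc₃0 : 0 < c₃ := by positivity
  set s0 := Real.sqrt (m*(M+m)) with hs0def
  have hs00 : 0 ≤ s0 := Real.sqrt_nonneg _
  have hs02 : s0^2 = m*(M+m) := Real.sq_sqrt (by positivity)
  have hs0lt : s0 < M+m := by
    have h9 : m*(M+m) < (M+m)^2 := by
      have e9 : (M+m)^2 - m*(M+m) = M*(M+m) := by ring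
      have h10 : 0 < M*(M+m) := mul_pos hM (by linarith)
      linarith
    have h11 := Real.sqrt_lt_sqrt (show (0:ℝ) ≤ m*(M+m) by positivity) h9
    rw [Real.sqrt_sq (show (0:ℝ) ≤ M+m by linarith)] at h11
    rw [hs0def]
    exact h11
  set κ := ((M+m) - s0) * (-hd0) with hκ
  have hκ0 : 0 < κ := mul_pos (by linarith) (by linarith)
  set Gd := |∫ y in h0..εh, g y * y^(-α)| with hGd
  have hGd0 : 0 ≤ Gd := abs_nonneg _
  set μ0 := min ((ρ/2)/(c₃*T+1)) (κ/(M*Gd+1)) with hμ0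
  have hμ00 : 0 < μ0 := lt_min (by positivity) (by positivity)
  filter_upwards [Ioo_mem_nhdsGT_of_mem
    (show (0:ℝ) ∈ Ico 0 μ0 from ⟨le_refl 0, hμ00⟩)] with μ hμmem
  obtain ⟨hμpos, hμlt⟩ := hμmem
  have solμ := hsol μ hμpos
  have hA : μ * c₃ * T < ρ/2 := by
    have h1 : μ < (ρ/2)/(c₃*T+1) := lt_of_lt_of_le hμlt (min_le_left _ _)
    rw [lt_div_iff₀ (by positivity)] at h1
    have e : μ*c₃*T + μ = μ*(c₃*T+1) := by ring
    linarith
  have hB : μ * M * Gd < κ := by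
    have h1 : μ < κ/(M*Gd+1) := lt_of_lt_of_le hμlt (min_le_right _ _)
    rw [lt_div_iff₀ (by positivity)] at h1
    have e : μ*M*Gd + μ = μ*(M*Gd+1) := by ring
    linarith
  intro t htK
  have ht0 : 0 ≤ t := hK0 htK
  have htT : t ≤ T := hle t htK
  rw [Real.dist_eq]
  have hcont : ∀ s : ℝ, 0 ≤ s → ContinuousAt (h μ) s :=
    fun s hs => ((solμ.2.1 s hs).1).continuousAt
  have hinit : h μ 0 = h0 := solμ.2.2.2.2.1
  -- global displacement bound
  have hdisp : ∀ s : ℝ, 0 ≤ s → |h μ s - h0| ≤ V * s := by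
    intro s hs
    have H := HitStick.abs_sub_le_of_deriv_abs_le (f := h μ) (c := 0) (C := V)
      (t₁ := s)
      (fun u hu => (hcont u hu.1).continuousWithinAt)
      (fun u hu => (solμ.2.1 u (le_of_lt hu.1)).1)
      (fun u hu => by
        simpa using HitStick.deriv_h_abs_le hk hM hm hμpos hD3 solμ u (le_of_lt hu.1))
      s ⟨hs, le_refl s⟩
    rw [hinit] at H
    simpa using H
  -- the pre-crossing estimate
  have est : ∀ t₁ : ℝ, 0 ≤ t₁ → t₁ ≤ T → (∀ s ∈ Icc (0:ℝ) t₁, ρ ≤ h μ s) →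
      ∀ s ∈ Icc (0:ℝ) t₁, |h μ s - h0 - hd0 * s| ≤ μ * c₃ * s := by
    intro t₁ ht₁0 ht₁T hρs
    have hxi := HitStick.xi_deriv_bound hk hM hm hμpos hD3 solμ hρ0 hρs
    have hb' : ∀ u ∈ Ioo (0:ℝ) t₁, |deriv (h μ) u - hd0| ≤ μ * c₃ := by
      intro u hu
      have hu0 : 0 ≤ u := le_of_lt hu.1
      have huT : u ≤ T := le_trans (le_of_lt hu.2) ht₁T
      have hmom := HitStick.momentum_const hk hM hm hμpos hD3 solμ hh0 u hu0
      have hGb : |∫ y in h0..(h μ u), g y * y^(-α)| ≤ c₂ := by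
        have h1 := HitStick.G_abs_le (g := g) (h0 := h0) (x := h μ u)
          hD3.1 hD3.2.2.1 hD3.2.2.2.2.1 hρ0 hρh0 (hρs u ⟨hu0, le_of_lt hu.2⟩)
        have h2 := hdisp u hu0
        calc |∫ y in h0..(h μ u), g y * y^(-α)|
            ≤ C₂ * ρ^(-α) * |h μ u - h0| := h1
          _ ≤ C₂ * ρ^(-α) * (V*u) := by
              apply mul_le_mul_of_nonneg_left (le_trans h2 (le_refl _)) (by positivity)
          _ ≤ Db * (V*T) := by
              rw [hDb]
              apply mul_le_mul_of_nonneg_left _ (by positivity)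
              exact mul_le_mul_of_nonneg_left huT hV0
          _ = c₂ := by rw [hc₂]
      have hxiu := hxi u ⟨hu0, le_of_lt hu.2⟩
      have hxiu' : |deriv (ξ μ) u| ≤ μ * c₁ := by
        apply le_trans hxiu
        rw [hc₁]
        have h9 : Db * V * t₁ ≤ Db * V * T :=
          mul_le_mul_of_nonneg_left ht₁T (by positivity)
        have h10 : 1 + Db*V*t₁ ≤ 1 + Db*V*T := by linarith
        exact mul_le_mul_of_nonneg_left h10 (le_of_lt hμpos)
      have key : (M+m) * (deriv (h μ) u - hd0)
          = m * deriv (ξ μ) u - μ*M*(∫ y in h0..(h μ u), g y * y^(-α)) := by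
        linarith [hmom]
      have habs2 : (M+m) * |deriv (h μ) u - hd0| ≤ m*(μ*c₁) + μ*M*c₂ := by
        have e1 : (M+m) * |deriv (h μ) u - hd0| = |(M+m) * (deriv (h μ) u - hd0)| := by
          rw [abs_mul, abs_of_pos (show (0:ℝ) < M+m by linarith)]
        rw [e1, key]
        calc |m * deriv (ξ μ) u - μ*M*(∫ y in h0..(h μ u), g y * y^(-α))|
            ≤ |m * deriv (ξ μ) u| + |μ*M*(∫ y in h0..(h μ u), g y * y^(-α))| :=
              abs_sub _ _
          _ ≤ m*(μ*c₁) + μ*M*c₂ := by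
              have i1 : |m * deriv (ξ μ) u| = m * |deriv (ξ μ) u| := by
                rw [abs_mul, abs_of_pos hm]
              have i2 : |μ*M*(∫ y in h0..(h μ u), g y * y^(-α))|
                  = μ*M*|∫ y in h0..(h μ u), g y * y^(-α)| := by
                rw [abs_mul, abs_of_pos (mul_pos hμpos hM)]
              rw [i1, i2]
              have := mul_le_mul_of_nonneg_left hxiu' (le_of_lt hm)
              have := mul_le_mul_of_nonneg_left hGb (le_of_lt (mul_pos hμpos hM))
              linarith
      rw [hc₃]
      rw [mul_div_assoc', le_div_iff₀ (show (0:ℝ) < M+m by linarith)]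
      have e9 : μ*(m*c₁ + M*c₂) = m*(μ*c₁) + μ*M*c₂ := by ring
      have e10 : |deriv (h μ) u - hd0| * (M+m) = (M+m) * |deriv (h μ) u - hd0| := by
        ring
      linarith [habs2]
    intro s hs
    have H := HitStick.abs_sub_le_of_deriv_abs_le (f := h μ) (c := hd0) (C := μ*c₃)
      (t₁ := t₁)
      (fun u hu => (hcont u hu.1).continuousWithinAt)
      (fun u hu => (solμ.2.1 u (le_of_lt hu.1)).1)
      hb' s hs
    rw [hinit] at H
    exact H
  -- case analysis on whether h μ ever dips to ρ on [0, T]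
  set S := {s : ℝ | s ∈ Icc (0:ℝ) T ∧ h μ s ≤ ρ} with hS
  have hcontT : ContinuousOn (h μ) (Icc 0 T) :=
    fun s hs => (hcont s hs.1).continuousWithinAt
  rcases Set.eq_empty_or_nonempty S with hSe | hSne
  · -- no dip: free fall estimate on all of [0, T]
    have hall : ∀ s ∈ Icc (0:ℝ) T, ρ ≤ h μ s := by
      intro s hs
      by_contra hcon
      push_neg at hcon
      exact absurd (Set.mem_ofPred.2 ⟨hs, le_of_lt hcon⟩ : s ∈ S) (by rw [← hS, hSe]; simp)
    have hest := est T hT0 (le_refl T) hall t ⟨ht0, htT⟩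
    have h2 : |h μ t - h0 - hd0*t| < ρ/2 := by
      apply lt_of_le_of_lt _ hA
      apply le_trans hest
      have : μ * c₃ * t ≤ μ * c₃ * T :=
        mul_le_mul_of_nonneg_left htT (by positivity)
      linarith
    have h3 := abs_le.1 (le_of_lt h2)
    have hge : ρ ≤ h μ t := hall t ⟨ht0, htT⟩
    have h4 : 0 ≤ h0 + hd0*t := by linarith
    rw [max_eq_right h4, abs_sub_comm]
    have : ρ/2 < ε := by
      rw [hρdef]; linarith
    rw [abs_lt]
    constructor <;> linarith
  · -- there is a dip; let τ be the first dip time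
    have hScl : IsClosed S := by
      have : S = Icc (0:ℝ) T ∩ (h μ) ⁻¹' (Iic ρ) := rfl
      rw [this]
      exact hcontT.preimage_isClosed_of_isClosed isClosed_Icc isClosed_Iic
    have hSbdd : BddBelow S := ⟨0, fun x hx => hx.1.1⟩
    set τ := sInf S with hτdef
    have hτS : τ ∈ S := hScl.csInf_mem hSne hSbdd
    have hτIcc : τ ∈ Icc (0:ℝ) T := hτS.1
    have hτpos : 0 < τ := by
      rcases lt_or_eq_of_le hτIcc.1 with h' | h'
      · exact h'
      · exfalso
        have := hτS.2
        rw [← h', hinit] at this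
        linarith
    have hpre : ∀ s : ℝ, 0 ≤ s → s < τ → ρ < h μ s := by
      intro s hs0 hsτ
      by_contra hcon
      push_neg at hcon
      have hsS : s ∈ S := ⟨⟨hs0, le_trans (le_of_lt hsτ) hτIcc.2⟩, hcon⟩
      exact absurd (csInf_le hSbdd hsS) (not_le.2 hsτ)
    have hτeq : h μ τ = ρ := by
      apply le_antisymm hτS.2
      have hcA : ContinuousAt (h μ) τ := hcont τ hτIcc.1
      have htd : Tendsto (h μ) (nhdsWithin τ (Iio τ)) (nhds (h μ τ)) :=
        hcA.tendsto.mono_left nhdsWithin_le_nhds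
      apply ge_of_tendsto htd
      filter_upwards [Ioo_mem_nhdsLT_of_mem
        (show τ ∈ Ioc 0 τ from ⟨hτpos, le_refl τ⟩)] with s hs
      exact le_of_lt (hpre s (le_of_lt hs.1) hs.2)
    have hτall : ∀ s ∈ Icc (0:ℝ) τ, ρ ≤ h μ s := by
      intro s hs
      rcases lt_or_eq_of_le hs.2 with hlt | heq2
      · exact le_of_lt (hpre s hs.1 hlt)
      · rw [heq2, hτeq]
    have hestτ := est τ hτIcc.1 hτIcc.2 hτall
    by_cases htτ : t ≤ τ
    · -- before the dip: free fall estimate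
      have hest := hestτ t ⟨ht0, htτ⟩
      have h2 : |h μ t - h0 - hd0*t| < ρ/2 := by
        apply lt_of_le_of_lt _ hA
        apply le_trans hest
        have : μ * c₃ * t ≤ μ * c₃ * T :=
          mul_le_mul_of_nonneg_left htT (by positivity)
        linarith
      have h3 := abs_le.1 (le_of_lt h2)
      have hge : ρ ≤ h μ t := hτall t ⟨ht0, htτ⟩
      have h4 : 0 ≤ h0 + hd0*t := by linarith
      rw [max_eq_right h4, abs_sub_comm]
      have : ρ/2 < ε := by
        rw [hρdef]; linarith
      rw [abs_lt]
      constructor <;> linarith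
    · push_neg at htτ
      have hτt : τ ≤ t := le_of_lt htτ
      -- sticking: h μ stays below εh after τ
      have hstick : h μ t < εh := by
        by_contra hcon
        push_neg at hcon
        have hcontτt : ContinuousOn (h μ) (Icc τ t) :=
          fun s hs => (hcont s (le_trans hτIcc.1 hs.1)).continuousWithinAt
        have hmemI : εh ∈ Icc (h μ τ) (h μ t) := by
          constructor
          · rw [hτeq, hρdef]; linarith
          · exact hcon
        obtain ⟨a, haI, haeq⟩ := intermediate_value_Icc hτt hcontτt hmemI
        set A := {s : ℝ | s ∈ Icc τ t ∧ h μ s = εh} with hAdef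
        have hAne : A.Nonempty := ⟨a, haI, haeq⟩
        have hAcl : IsClosed A := by
          have : A = Icc τ t ∩ (h μ) ⁻¹' {εh} := rfl
          rw [this]
          exact hcontτt.preimage_isClosed_of_isClosed isClosed_Icc isClosed_singleton
        have hAbdd : BddBelow A := ⟨τ, fun x hx => hx.1.1⟩
        set ts := sInf A with htsdef
        have htsA : ts ∈ A := hAcl.csInf_mem hAne hAbdd
        have htsτ : τ < ts := by
          rcases lt_or_eq_of_le htsA.1.1 with h' | h'
          · exact h'
          · exfalso
            have := htsA.2
            rw [← h', hτeq, hρdef] at this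
            linarith
        have hbelow : ∀ s ∈ Ico τ ts, h μ s < εh := by
          intro s hs
          by_contra hcon2
          push_neg at hcon2
          have hst : s ≤ t := le_trans (le_of_lt hs.2) htsA.1.2
          have hcont2 : ContinuousOn (h μ) (Icc τ s) :=
            fun u hu => (hcont u (le_trans hτIcc.1 hu.1)).continuousWithinAt
          obtain ⟨a2, ha2I, ha2eq⟩ := intermediate_value_Icc hs.1 hcont2
            ⟨by rw [hτeq, hρdef]; linarith, hcon2⟩
          have ha2A : a2 ∈ A := ⟨⟨ha2I.1, le_trans ha2I.2 hst⟩, ha2eq⟩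
          have := csInf_le hAbdd ha2A
          have := ha2I.2
          have := hs.2
          linarith
        have hts0 : 0 ≤ ts := le_trans hτIcc.1 htsA.1.1
        have hdts : HasDerivAt (h μ) (deriv (h μ) ts) ts :=
          ((solμ.2.1 ts hts0).1).hasDerivAt
        have hslope := hasDerivAt_iff_tendsto_slope.1 hdts
        have hslope' : Tendsto (slope (h μ) ts) (nhdsWithin ts (Iio ts))
            (nhds (deriv (h μ) ts)) :=
          hslope.mono_left (nhdsWithin_mono _ (fun x hx => ne_of_lt hx))
        have hup : 0 ≤ deriv (h μ) ts := by
          apply ge_of_tendsto hslope'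
          filter_upwards [Ioo_mem_nhdsLT_of_mem
            (show ts ∈ Ioc τ ts from ⟨htsτ, le_refl _⟩)] with s hs
          have h1 : h μ s < εh := hbelow s ⟨le_of_lt hs.1, hs.2⟩
          rw [slope_def_field, htsA.2]
          apply le_of_lt
          exact div_pos_of_neg_of_neg (by linarith) (by linarith [hs.2])
        apply HitStick.no_up_crossing hk hM hm hμpos hD3 solμ hh0 hhd0 hts0
          htsA.2 hup
        rw [← hGd]
        rw [← hs0def, ← hκ] at *
        exact hB
      -- conclude: both h μ t and the limit profile lie in [0, εh]
      have hHt : h0 + hd0 * t ≤ εh := by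
        have h1 := hestτ τ ⟨hτIcc.1, le_refl τ⟩
        have h2 : μ*c₃*τ < ρ/2 := by
          apply lt_of_le_of_lt _ hA
          exact mul_le_mul_of_nonneg_left hτIcc.2 (by positivity)
        have h3 := abs_le.1 h1
        have h4 : h0 + hd0*τ ≤ εh := by
          rw [hτeq] at h3
          linarith [h3.1, h2, hρdef]
        have h5 : hd0*t ≤ hd0*τ := by
          have h9 : (-hd0)*τ ≤ (-hd0)*t :=
            mul_le_mul_of_nonneg_left hτt (by linarith)
          linarith
        linarith
      have hpos_t : 0 < h μ t := solμ.1 t ht0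
      have hmax : max 0 (h0 + hd0*t) ≤ εh := max_le (le_of_lt hεh0) hHt
      have hmax0 : (0:ℝ) ≤ max 0 (h0+hd0*t) := le_max_left _ _
      have hεε : εh < ε := by linarith
      rw [abs_lt]
      constructor <;> linarith
end
end

section
/- No rebound for a rigid body (Corollary 2.6): Let m, μ > 0, let D : (0,∞) → (0,∞) be locally Lipschitz continuous, and let h : [0,∞) → ℝ be twice differentiable with h(0) = h₀ > 0, ḣ(0) = ḣ₀ < 0, satisfying m·ḧ(t) = −μ·D(h(t))·ḣ(t) and h(t) > 0 for every t > 0. Then h is a monotone function on [0,∞). -/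
open Real Filter Set MeasureTheory Metric

noncomputable section

/-- Corollary 2.6: no rebound for a rigid body: a positive solution of
`m·ḧ = −μ·D(h)·ḣ` with `h(0) = h₀ > 0`, `ḣ(0) = ḣ₀ < 0` is monotone on `[0,∞)`. -/
theorem no_rebound_rigid_body
    (m μ h0 hd0 : ℝ) (D : ℝ → ℝ) (h : ℝ → ℝ)
    (hm : 0 < m) (hμ : 0 < μ) (hh0 : 0 < h0) (hhd0 : hd0 < 0)
    (hDpos : ∀ x : ℝ, 0 < x → 0 < D x)
    (hDlip : ∀ x : ℝ, 0 < x → ∃ ε > 0, ∃ L : NNReal,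
      LipschitzOnWith L D (Metric.ball x ε ∩ Set.Ioi 0))
    (hdiff : ∀ t : ℝ, 0 ≤ t →
      DifferentiableAt ℝ h t ∧ DifferentiableAt ℝ (deriv h) t)
    (hode : ∀ t : ℝ, 0 ≤ t →
      m * deriv (deriv h) t = - μ * D (h t) * deriv h t)
    (hinit : h 0 = h0) (hinit' : deriv h 0 = hd0)
    (hpos : ∀ t : ℝ, 0 < t → 0 < h t) :
    MonotoneOn h (Set.Ici 0) ∨ AntitoneOn h (Set.Ici 0) := by
  right
  have hc0 : 0 < μ / m := div_pos hμ hm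
  have hposI : ∀ t : ℝ, 0 ≤ t → 0 < h t := by
    intro t ht
    rcases ht.lt_or_eq with h' | h'
    · exact hpos t h'
    · rw [← h', hinit]; exact hh0
  have hDc : ∀ x : ℝ, 0 < x → ContinuousAt D x := by
    intro x hx
    obtain ⟨ε, hε, L, hL⟩ := hDlip x hx
    have hmem : Metric.ball x ε ∩ Set.Ioi 0 ∈ nhds x :=
      Filter.inter_mem (Metric.ball_mem_nhds x hε) (Ioi_mem_nhds hx)
    exact hL.continuousOn.continuousAt hmem
  set φ : ℝ → ℝ := fun t => μ / m * D (h (max t 0)) with hφdef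
  have hhc : ∀ t : ℝ, ContinuousAt (fun s => h (max s 0)) t := by
    intro t
    have h1 : ContinuousAt (fun s : ℝ => max s 0) t :=
      (continuous_id.max continuous_const).continuousAt
    have h2 : ContinuousAt h (max t 0) := (hdiff _ (le_max_right t 0)).1.continuousAt
    exact ContinuousAt.comp (g := h) h2 h1
  have hφc : Continuous φ := by
    rw [continuous_iff_continuousAt]
    intro t
    exact continuousAt_const.mul (ContinuousAt.comp (g := D) (hDc _ (hposI _ (le_max_right t 0))) (hhc t))
  set F : ℝ → ℝ := fun t => ∫ s in (0:ℝ)..t, φ s with hFdef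
  have hFd : ∀ t : ℝ, HasDerivAt F (φ t) t := by
    intro t
    exact intervalIntegral.integral_hasDerivAt_right (hφc.intervalIntegrable _ _)
      hφc.aestronglyMeasurable.stronglyMeasurableAtFilter hφc.continuousAt
  set g : ℝ → ℝ := fun t => deriv h t * Real.exp (F t) with hgdef
  have hgd : ∀ t : ℝ, 0 ≤ t → HasDerivAt g 0 t := by
    intro t ht
    have hv : HasDerivAt (deriv h) (deriv (deriv h) t) t := (hdiff t ht).2.hasDerivAt
    have hE : HasDerivAt (fun s => Real.exp (F s)) (Real.exp (F t) * φ t) t := (hFd t).exp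
    have hmul := hv.mul hE
    have hode' : deriv (deriv h) t = -(φ t) * deriv h t := by
      have h1 := hode t ht
      have hmax : max t 0 = t := max_eq_left ht
      simp only [hφdef, hmax]
      field_simp
      linarith [h1]
    have h0d : deriv (deriv h) t * Real.exp (F t) + deriv h t * (Real.exp (F t) * φ t) = 0 := by
      rw [hode']; ring
    rw [h0d] at hmul
    exact hmul
  have hgc : ∀ t : ℝ, 0 ≤ t → g t = hd0 := by
    intro t ht
    have hconst := constant_of_has_deriv_right_zero (f := g) (a := 0) (b := t)
      (fun s hs => ((hgd s hs.1).differentiableAt.continuousAt).continuousWithinAt)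
      (fun s hs => (hgd s hs.1).hasDerivWithinAt)
    have h0 : g 0 = hd0 := by
      simp [hgdef, hFdef, hinit', intervalIntegral.integral_same]
    rw [← h0]
    exact hconst t ⟨ht, le_refl t⟩
  have hvneg : ∀ t : ℝ, 0 ≤ t → deriv h t < 0 := by
    intro t ht
    have hgt : deriv h t * Real.exp (F t) = hd0 := hgc t ht
    nlinarith [Real.exp_pos (F t)]
  exact (strictAntiOn_of_deriv_neg (convex_Ici 0)
    (fun t ht => ((hdiff t ht).1.continuousAt).continuousWithinAt)
    (fun t ht => hvneg t (le_of_lt (by simpa using ht)))).antitoneOn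
end
end

section
/- Rebound phase has nonnegative velocity (Step 2 of the proof of Theorem 3.3): Under the assumptions of Theorem 3.3 (hypotheses (B1), (B2), (B4), (D1), (D2), (D4), (D5), (D6), initial data ξ₀ = ξ̇₀ = 0, h₀ > 0, ḣ₀ < 0, y⁻ < −δ₂), let μ_n → 0⁺ with global solutions (h_n, ξ_n) of (gf), and suppose ξ_n converges uniformly on compact sets to the solution ξ of ξ̈ + a·b(ξ) = 0, ξ(t₀) = 0, ξ̇(t₀) = −ḣ₀, where t₀ := −h₀/ḣ₀, and that h_n(t) → max{0, h₀ + ḣ₀·t} pointwise. Let t₁ < t₂ be such that ξ < 0 on (t₁, t₂). Then for every ε > 0 with 6ε < t₂ − t₁ there exists N such that for all n ≥ N one has ḣ_n(t) ≥ 0 for all t ∈ (t₁ + 3ε, t₂ − 3ε). -/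
open Real Filter Set MeasureTheory Metric

noncomputable section

set_option maxHeartbeats 2000000 in
/-- Step 2 of the proof of Theorem 3.3: on any interval `(t₁,t₂) ⊂ (t₀,∞)`
where the limiting oscillation `ξ` is negative, the bodies eventually move away
from the wall: for `ε > 0` with `6ε < t₂ − t₁` and all large `n`,
`ḣ_n ≥ 0` on `(t₁ + 3ε, t₂ − 3ε)`. -/
theorem rebound_phase_nonneg_velocity
    (a h0 hd0 c α δ₁ c₁ γ₁ δ₂ yminus t₁ t₂ : ℝ)
    (b : ℝ → ℝ) (D : ℝ → ℝ → ℝ) (γfun : ℝ → ℝ)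
    (μseq : ℕ → ℝ) (h ξ : ℕ → ℝ → ℝ) (ξl : ℝ → ℝ)
    (ha : 0 < a) (hh0 : 0 < h0) (hhd0 : hd0 < 0)
    (hB1 : HypB1 b) (hB2 : HypB2 b) (hB4 : HypB4 b)
    (hDpos : HypDpos D) (hD1 : HypD1 D) (hD2 : HypD2 D c α)
    (hD4 : HypD4 D) (hD5 : HypD5 D α δ₁ c₁ γ₁) (hD6 : HypD6 D γ₁ δ₂ γfun)
    (hym : yminus < 0) (hymB : 2 * a * potB b yminus = hd0 ^ 2)
    (hymδ₂ : yminus < -δ₂)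
    (hμpos : ∀ n, 0 < μseq n) (hμ0 : Tendsto μseq atTop (nhds 0))
    (hsol : ∀ n, IsGlobalSolution a (μseq n) b D h0 hd0 0 0 (h n) (ξ n))
    (hosc : IsOscSolution a (-h0 / hd0) (-hd0) b ξl)
    (hconvξ : ∀ K : Set ℝ, IsCompact K → K ⊆ Set.Ici 0 →
      TendstoUniformlyOn (fun n t => ξ n t) ξl atTop K)
    (hhpt : ∀ t : ℝ, 0 ≤ t →
      Tendsto (fun n => h n t) atTop (nhds (max 0 (h0 + hd0 * t))))
    (ht₁ : -h0 / hd0 < t₁) (ht₁₂ : t₁ < t₂)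
    (hneg : ∀ t ∈ Set.Ioo t₁ t₂, ξl t < 0) :
    ∀ ε : ℝ, 0 < ε → 6 * ε < t₂ - t₁ →
      ∃ N : ℕ, ∀ n ≥ N, ∀ t ∈ Set.Ioo (t₁ + 3 * ε) (t₂ - 3 * ε),
        0 ≤ deriv (h n) t := by
  intro ε hε hε6
  have ht₀pos : 0 < -h0 / hd0 := div_pos_of_neg_of_neg (by linarith) hhd0
  set a₁ := t₁ + ε with ha₁def
  set a₂ := t₂ - ε with ha₂def
  have ha₁pos : 0 < a₁ := by simp only [ha₁def]; linarith
  have ha₁₂ : a₁ < a₂ := by simp only [ha₁def, ha₂def]; linarith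
  have hIsub0 : Icc a₁ a₂ ⊆ Ici (0:ℝ) := fun s hs => le_trans ha₁pos.le hs.1
  obtain ⟨_, _, hξlC, _, _⟩ := hosc
  have hξlI : ContinuousOn ξl (Icc a₁ a₂) :=
    hξlC.mono (fun s hs => le_trans (by linarith : -h0 / hd0 ≤ a₁) hs.1)
  have hIne : (Icc a₁ a₂).Nonempty := ⟨a₁, le_refl _, ha₁₂.le⟩
  have hIsubIoo : Icc a₁ a₂ ⊆ Ioo t₁ t₂ := fun s hs =>
    ⟨by have := hs.1; simp only [ha₁def] at this; linarith,
     by have := hs.2; simp only [ha₂def] at this; linarith⟩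
  obtain ⟨sM, hsM, hsMmax⟩ := isCompact_Icc.exists_isMaxOn hIne hξlI
  have hξlsM : ξl sM < 0 := hneg sM (hIsubIoo hsM)
  set ρ := -(ξl sM) / 2 with hρdef
  have hρpos : 0 < ρ := by simp only [hρdef]; linarith
  obtain ⟨sm, hsm, hsmmin⟩ := isCompact_Icc.exists_isMinOn hIne hξlI
  set L := ξl sm with hLdef
  have hLneg : L < 0 := hneg sm (hIsubIoo hsm)
  have hJne : (Icc (L - ρ) (-ρ)).Nonempty := ⟨-ρ, by constructor <;> [linarith; linarith]⟩
  have hbcont : Continuous b := hB1.continuous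
  obtain ⟨y₀, hy₀, hy₀max⟩ := isCompact_Icc.exists_isMaxOn hJne hbcont.continuousOn
  set β := -(b y₀) with hβdef
  have hy₀neg : y₀ < 0 := lt_of_le_of_lt hy₀.2 (by linarith)
  have hβpos : 0 < β := by
    have h1 := hB4 y₀ (ne_of_lt hy₀neg)
    have : b y₀ < 0 := by nlinarith
    simp only [hβdef]; linarith
  have hbJ : ∀ y ∈ Icc (L - ρ) (-ρ), b y ≤ -β := by
    intro y hy
    have h1 : b y ≤ b y₀ := hy₀max hy
    simp only [hβdef]; linarith
  -- N₁ : uniform closeness of ξ n to ξl on I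
  have huc := hconvξ (Icc a₁ a₂) isCompact_Icc hIsub0
  rw [Metric.tendstoUniformlyOn_iff] at huc
  have hN₁ := huc ρ hρpos
  -- N₂ : h n a₁ small
  have hlim : Tendsto (fun n => h n a₁) atTop (nhds 0) := by
    have h1 := hhpt a₁ ha₁pos.le
    have h2 : h0 + hd0 * a₁ < 0 := by
      have h3 : -h0 / hd0 < a₁ := by linarith
      rw [div_lt_iff_of_neg hhd0] at h3
      nlinarith
    rwa [max_eq_left h2.le] at h1
  have hN₂ : ∀ᶠ n in atTop, h n a₁ < β * ε ^ 2 :=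
    hlim.eventually_lt_const (by positivity)
  obtain ⟨N, hN⟩ := (hN₁.and hN₂).exists_forall_of_atTop
  refine ⟨N, fun n hn t ht => ?_⟩
  obtain ⟨hNa, hNb⟩ := hN n hn
  by_contra hv
  push_neg at hv
  obtain ⟨hpos, hdiff, _, heq2, _⟩ := hsol n
  set f := h n with hfdef
  set v := deriv f with hvdef
  set ξn := ξ n with hξndef
  set μ := μseq n with hμdef
  clear_value μ ξn v f β L ρ a₂ a₁
  have hμpos' : 0 < μ := by rw [hμdef]; exact hμpos n
  have hta₁ : a₁ < t := by have := ht.1; simp only [ha₁def]; linarith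
  have hta₂ : t ≤ a₂ := by have := ht.2; simp only [ha₂def]; linarith
  have hsubI : Icc a₁ t ⊆ Icc a₁ a₂ := Icc_subset_Icc le_rfl hta₂
  have hbξ : ∀ s ∈ Icc a₁ t, b (ξn s) ≤ -β := by
    intro s hs
    have hsI := hsubI hs
    have hd := hNa s hsI
    rw [Real.dist_eq, abs_lt] at hd
    have hup : ξl s ≤ ξl sM := hsMmax hsI
    have hlo : L ≤ ξl s := by rw [hLdef]; exact hsmmin hsI
    have hρeq : ξl sM = -(2 * ρ) := by simp only [hρdef]; ring
    refine hbJ (ξn s) ⟨by linarith [hd.2], by linarith [hd.1]⟩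
  have hvdiff : ∀ s : ℝ, 0 ≤ s → DifferentiableAt ℝ v s := fun s hs => (hdiff s hs).2.1
  have hfdiff : ∀ s : ℝ, 0 ≤ s → DifferentiableAt ℝ f s := fun s hs => (hdiff s hs).1
  have hkey : ∀ s ∈ Icc a₁ t, v s < 0 → β ≤ deriv v s := by
    intro s hs hvs
    have hs0 : (0:ℝ) ≤ s := le_trans ha₁pos.le hs.1
    have heqs := heq2 s hs0
    have hD := hDpos (f s) (ξn s) (hpos s hs0)
    have hb := hbξ s hs
    have hmd : 0 < μ * D (f s) (ξn s) := mul_pos hμpos' hD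
    nlinarith [mul_pos hmd (neg_pos.mpr hvs)]
  have hvcont : ∀ s ∈ Icc a₁ t, ContinuousWithinAt v (Icc a₁ t) s := fun s hs =>
    ((hvdiff s (le_trans ha₁pos.le hs.1)).continuousAt).continuousWithinAt
  by_cases hall : ∀ s ∈ Icc a₁ t, v s < 0
  · -- Case 2 : v < 0 on all of [a₁, t]
    have hwmono : MonotoneOn (fun s => v s - β * s) (Icc a₁ t) := by
      apply monotoneOn_of_deriv_nonneg (convex_Icc _ _)
      · exact ContinuousOn.sub (fun s hs => hvcont s hs)
          ((continuous_const.mul continuous_id).continuousOn)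
      · intro s hs
        rw [interior_Icc] at hs
        exact ((hvdiff s (by have := hs.1; linarith)).sub
          ((differentiable_id.const_mul β) s)).differentiableWithinAt
      · intro s hs
        rw [interior_Icc] at hs
        have hsm : s ∈ Icc a₁ t := ⟨hs.1.le, hs.2.le⟩
        have hds : HasDerivAt (fun s => v s - β * s) (deriv v s - β) s := by
          have h1 := (hvdiff s (le_trans ha₁pos.le hs.1.le)).hasDerivAt
          have h2 : HasDerivAt (fun s : ℝ => β * s) β s := by
            simpa using (hasDerivAt_id s).const_mul β
          exact h1.sub h2
        rw [hds.deriv]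
        linarith [hkey s hsm (hall s hsm)]
    have htmem : t ∈ Icc a₁ t := ⟨hta₁.le, le_rfl⟩
    have hvle : ∀ s ∈ Icc a₁ t, v s ≤ v t - β * (t - s) := by
      intro s hs
      have := hwmono hs htmem hs.2
      simp only at this
      linarith
    have hpanti : StrictAntiOn (fun s => f s - β / 2 * (t - s) ^ 2) (Icc a₁ t) := by
      apply strictAntiOn_of_deriv_neg (convex_Icc _ _)
      · apply ContinuousOn.sub
        · exact fun s hs =>
            ((hfdiff s (le_trans ha₁pos.le hs.1)).continuousAt).continuousWithinAt
        · exact (continuous_const.mul ((continuous_const.sub continuous_id).pow 2)).continuousOn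
      · intro s hs
        rw [interior_Icc] at hs
        have hsm : s ∈ Icc a₁ t := ⟨hs.1.le, hs.2.le⟩
        have hds : HasDerivAt (fun s => f s - β / 2 * (t - s) ^ 2)
            (v s + β * (t - s)) s := by
          have h1 : HasDerivAt f (v s) s := by
            rw [hvdef]; exact (hfdiff s (le_trans ha₁pos.le hs.1.le)).hasDerivAt
          have h2 : HasDerivAt (fun s : ℝ => t - s) (-1) s := by
            simpa using (hasDerivAt_id s).const_sub t
          have h3 : HasDerivAt (fun s : ℝ => β / 2 * (t - s) ^ 2)
              (β / 2 * ((2 : ℕ) * (t - s) ^ 1 * (-1))) s := (h2.pow 2).const_mul (β / 2)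
          have h4 := h1.sub h3
          refine h4.congr_deriv ?_
          ring
        rw [hds.deriv]
        have h5 := hvle s hsm
        have h6 := hall t htmem
        linarith
    have hlt := hpanti ⟨le_rfl, hta₁.le⟩ htmem hta₁
    have hlt' : f t < f a₁ - β / 2 * (t - a₁) ^ 2 := by
      have : t - t = 0 := sub_self t
      simp only at hlt
      rw [this] at hlt
      norm_num at hlt
      linarith
    have hft := hpos t (by linarith : (0:ℝ) ≤ t)
    have hεt : 2 * ε < t - a₁ := by have := ht.1; simp only [ha₁def]; linarith
    have h4 : 4 * ε ^ 2 < (t - a₁) ^ 2 := by nlinarith [sq_nonneg (t - a₁ - 2 * ε)]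
    have hq : β * ε ^ 2 < β / 2 * (t - a₁) ^ 2 := by
      have := mul_lt_mul_of_pos_left h4 (by positivity : (0:ℝ) < β / 2)
      have h5 : 0 < β * ε ^ 2 := mul_pos hβpos (pow_pos hε 2)
      linarith only [h4, h5, this]
    linarith
  · -- Case 1 : v has a nonnegative value on [a₁, t]
    push_neg at hall
    obtain ⟨s0, hs0, hvs0⟩ := hall
    have hvcont0 : ContinuousOn v (Icc s0 t) := fun s hs =>
      ((hvdiff s (le_trans ha₁pos.le (le_trans hs0.1 hs.1))).continuousAt).continuousWithinAt
    set S := Icc s0 t ∩ v ⁻¹' {0} with hSdef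
    have hSne : S.Nonempty := by
      have hiv := intermediate_value_Icc' hs0.2 hvcont0
      have h0mem : (0:ℝ) ∈ Icc (v t) (v s0) := ⟨hv.le, hvs0⟩
      obtain ⟨s', hs', hvs'⟩ := hiv h0mem
      exact ⟨s', hs', hvs'⟩
    have hSclosed : IsClosed S :=
      hvcont0.preimage_isClosed_of_isClosed isClosed_Icc isClosed_singleton
    have hScompact : IsCompact S :=
      isCompact_Icc.of_isClosed_subset hSclosed (inter_subset_left)
    set s1 := sSup S with hs1def
    clear_value s1 S
    have hs1S : s1 ∈ S := by rw [hs1def]; exact hScompact.sSup_mem hSne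
    rw [hSdef] at hs1S
    obtain ⟨hs1mem, hvs1⟩ := hs1S
    have hvs1' : v s1 = 0 := hvs1
    have hs1t : s1 < t := by
      rcases lt_or_eq_of_le hs1mem.2 with h | h
      · exact h
      · rw [h] at hvs1'; linarith
    have hbdd : BddAbove S := hScompact.bddAbove
    have hvneg : ∀ s ∈ Ioc s1 t, v s < 0 := by
      intro s hs
      by_contra hge
      push_neg at hge
      have hst : s ≤ t := hs.2
      have hiv := intermediate_value_Icc' hst (hvcont0.mono
        (Icc_subset_Icc (le_trans hs1mem.1 hs.1.le) le_rfl))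
      obtain ⟨s', hs', hvs'⟩ := hiv ⟨hv.le, hge⟩
      have hs'S : s' ∈ S := by
        rw [hSdef]; exact ⟨⟨le_trans hs1mem.1 (le_trans hs.1.le hs'.1), hs'.2⟩, hvs'⟩
      have h7 := le_csSup hbdd hs'S
      rw [← hs1def] at h7
      have := hs'.1
      have := hs.1
      linarith
    have hmono : StrictMonoOn v (Icc s1 t) := by
      apply strictMonoOn_of_deriv_pos (convex_Icc _ _)
      · exact hvcont0.mono (Icc_subset_Icc hs1mem.1 le_rfl)
      · intro s hs
        rw [interior_Icc] at hs
        have hsm : s ∈ Icc a₁ t := ⟨le_trans hs0.1 (le_trans hs1mem.1 hs.1.le), hs.2.le⟩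
        have := hkey s hsm (hvneg s ⟨hs.1, hs.2.le⟩)
        linarith
    have := hmono ⟨le_rfl, hs1t.le⟩ ⟨hs1t.le, le_rfl⟩ hs1t
    rw [hvs1'] at this
    linarith
end
end
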